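/- For the bivariate Weibull distribution with survival function S(x,y) = exp(-[(x/λ₁)^(γ₁/α) + (y/λ₂)^(γ₂/α)]^α), the mixed moment is E[X^{i}Y^{j}] = λ₁^{i} λ₂^{j} Γ(iα/γ₁ + 1) Γ(jα/γ₂ + 1) Γ(i/γ₁ + j/γ₂ + 1) / Γ(α(i/γ₁ + j/γ₂) + 1), for i, j ≥ 0. -/

import Mathlib

open MeasureTheory Set Real

lemma subst1 {lam p : ℝ} (hlam : 0 < lam) (hp : 0 < p) (f : ℝ → ℝ) :
    ∫ y in Ioi (0:ℝ), f y = lam * p * ∫ v in Ioi (0:ℝ), v ^ (p - 1) * f (lam * v ^ p) := by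
  have h1 := integral_comp_mul_left_Ioi f 0 hlam
  rw [mul_zero] at h1
  have h2 := integral_comp_rpow_Ioi_of_pos (g := fun t => f (lam * t)) hp
  rw [← h2, smul_eq_mul] at h1
  have h3 : ∫ y in Ioi (0:ℝ), f y
      = lam * ∫ x in Ioi (0:ℝ), (p * x ^ (p - 1)) • f (lam * x ^ p) := by
    rw [h1, ← mul_assoc, mul_inv_cancel₀ hlam.ne', one_mul]
  simp only [smul_eq_mul] at h3
  rw [h3, mul_assoc]
  congr 1
  rw [← integral_const_mul p]
  refine setIntegral_congr_fun measurableSet_Ioi fun v hv => ?_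
  ring

lemma rpow_image_Ioi (p : ℝ) (hp : 0 < p) : (fun t : ℝ => t ^ p) '' Ioi 0 = Ioi 0 := by
  ext x
  rw [mem_image]
  constructor
  · rintro ⟨y, hy, rfl⟩; exact rpow_pos_of_pos hy p
  · intro hx
    refine ⟨x ^ (1 / p), rpow_pos_of_pos hx _, ?_⟩
    rw [← rpow_mul (le_of_lt hx), one_div_mul_cancel hp.ne', rpow_one]



lemma integrableOn_rpow_mul_exp_neg_rpow' {p q : ℝ} (hp : 0 < p) (hq : -1 < q) :
    IntegrableOn (fun x : ℝ => x ^ q * Real.exp (-x ^ p)) (Ioi 0) := by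
  have hs : 0 < (q + 1) / p := div_pos (by linarith) hp
  have h0 := Real.GammaIntegral_convergent hs
  have a1 : ∀ x : ℝ, x ∈ Ioi (0:ℝ) →
      HasDerivWithinAt (fun t : ℝ => t ^ p) (p * x ^ (p - 1)) (Ioi 0) x :=
    fun x hx => (Real.hasDerivAt_rpow_const (Or.inl (mem_Ioi.mp hx).ne')).hasDerivWithinAt
  have a2 : InjOn (fun x : ℝ => x ^ p) (Ioi 0) :=
    Set.InjOn.mono (fun x (hx : x ∈ Ioi (0:ℝ)) => show x ∈ {y : ℝ | 0 ≤ y} from (le_of_lt (mem_Ioi.mp hx) : (0:ℝ) ≤ x))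
      (Real.rpow_left_injOn hp.ne')
  have := (integrableOn_image_iff_integrableOn_abs_deriv_smul measurableSet_Ioi a1 a2
    (fun x => Real.exp (-x) * x ^ ((q + 1) / p - 1))).mp (by rwa [rpow_image_Ioi p hp])
  have heq : ∀ x ∈ Ioi (0:ℝ),
      |p * x ^ (p - 1)| • (Real.exp (-x ^ p) * (x ^ p) ^ ((q + 1) / p - 1))
        = p * (x ^ q * Real.exp (-x ^ p)) := by
    intro x hx
    have hx0 : 0 < x := hx
    rw [abs_of_pos (by positivity), smul_eq_mul, ← rpow_mul hx0.le]
    rw [show p * ((q + 1) / p - 1) = q + 1 - p by field_simp]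
    rw [mul_assoc]
    congr 1
    rw [mul_comm (Real.exp _) _, ← mul_assoc, ← rpow_add hx0,
      show p - 1 + (q + 1 - p) = q by ring]
  have h2 : IntegrableOn (fun x : ℝ => p * (x ^ q * Real.exp (-x ^ p))) (Ioi 0) :=
    this.congr_fun heq measurableSet_Ioi
  have h3 : IntegrableOn (fun x : ℝ => p⁻¹ * (p * (x ^ q * Real.exp (-x ^ p)))) (Ioi 0) :=
    h2.const_mul p⁻¹
  refine h3.congr_fun (fun x hx => ?_) measurableSet_Ioi
  beta_reduce
  rw [← mul_assoc, inv_mul_cancel₀ hp.ne', one_mul]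

noncomputable def Gfun (α s : ℝ) : ℝ :=
  Real.exp (-s ^ α) * (α ^ 2 * s ^ (2 * α - 2) - α * (α - 1) * s ^ (α - 2))

lemma Gfun_nonneg {α : ℝ} (hα : 0 < α) (hα1 : α ≤ 1) {s : ℝ} (hs : 0 < s) :
    0 ≤ Gfun α s := by
  unfold Gfun
  have h1 : (0:ℝ) ≤ s ^ (2 * α - 2) := rpow_nonneg hs.le _
  have h2 : (0:ℝ) ≤ s ^ (α - 2) := rpow_nonneg hs.le _
  have h3 : α * (α - 1) ≤ 0 := mul_nonpos_of_nonneg_of_nonpos hα.le (by linarith)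
  have : 0 ≤ α ^ 2 * s ^ (2 * α - 2) - α * (α - 1) * s ^ (α - 2) := by nlinarith
  positivity

lemma Gfun_measurable (α : ℝ) : Measurable (Gfun α) := by
  unfold Gfun
  fun_prop

lemma Mlem {α c : ℝ} (hα : 0 < α) (hc : 0 ≤ c) :
    ∫ s in Ioi (0:ℝ), s ^ (c + 1) * Gfun α s = Real.Gamma (c / α + 1) * (c + 1) := by
  have hq1 : (-1:ℝ) < c + 2 * α - 1 := by linarith
  have hq2 : (-1:ℝ) < c + α - 1 := by linarith
  have i1 := integrableOn_rpow_mul_exp_neg_rpow' hα hq1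
  have i2 := integrableOn_rpow_mul_exp_neg_rpow' hα hq2
  have e1 : ∀ s ∈ Ioi (0:ℝ), s ^ (c + 1) * Gfun α s
      = α ^ 2 * (s ^ (c + 2 * α - 1) * Real.exp (-s ^ α))
        - α * (α - 1) * (s ^ (c + α - 1) * Real.exp (-s ^ α)) := by
    intro s hs
    have hs0 : (0:ℝ) < s := hs
    unfold Gfun
    rw [show c + 2 * α - 1 = (c + 1) + (2 * α - 2) by ring,
      show c + α - 1 = (c + 1) + (α - 2) by ring, rpow_add hs0 (c+1) (2*α-2),
      rpow_add hs0 (c+1) (α-2)]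
    ring
  rw [setIntegral_congr_fun measurableSet_Ioi e1, integral_sub (i1.const_mul _) (i2.const_mul _),
    integral_const_mul, integral_const_mul, integral_rpow_mul_exp_neg_rpow hα hq1,
    integral_rpow_mul_exp_neg_rpow hα hq2,
    show (c + 2 * α - 1 + 1) / α = c / α + 2 by field_simp; ring,
    show (c + α - 1 + 1) / α = c / α + 1 by field_simp; ring]
  have hne : c / α + 1 ≠ 0 := by positivity
  rw [show c / α + 2 = (c / α + 1) + 1 by ring, Real.Gamma_add_one hne]
  field_simp
  ring

lemma Mint {α c : ℝ} (hα : 0 < α) (hc : 0 ≤ c) :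
    IntegrableOn (fun s : ℝ => s ^ (c + 1) * Gfun α s) (Ioi 0) := by
  have hq1 : (-1:ℝ) < c + 2 * α - 1 := by linarith
  have hq2 : (-1:ℝ) < c + α - 1 := by linarith
  have i1 := integrableOn_rpow_mul_exp_neg_rpow' hα hq1
  have i2 := integrableOn_rpow_mul_exp_neg_rpow' hα hq2
  have e1 : ∀ s ∈ Ioi (0:ℝ),
      α ^ 2 * (s ^ (c + 2 * α - 1) * Real.exp (-s ^ α))
        - α * (α - 1) * (s ^ (c + α - 1) * Real.exp (-s ^ α)) = s ^ (c + 1) * Gfun α s := by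
    intro s hs
    have hs0 : (0:ℝ) < s := hs
    unfold Gfun
    rw [show c + 2 * α - 1 = (c + 1) + (2 * α - 2) by ring,
      show c + α - 1 = (c + 1) + (α - 2) by ring, rpow_add hs0 (c+1) (2*α-2),
      rpow_add hs0 (c+1) (α-2)]
    ring
  have hsub : IntegrableOn (fun s : ℝ =>
      α ^ 2 * (s ^ (c + 2 * α - 1) * Real.exp (-s ^ α))
        - α * (α - 1) * (s ^ (c + α - 1) * Real.exp (-s ^ α))) (Ioi 0) :=
    (i1.const_mul _).sub (i2.const_mul _)
  exact hsub.congr_fun e1 measurableSet_Ioi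

lemma blem {a b s : ℝ} (ha : 0 ≤ a) (hb : 0 ≤ b) (hs : 0 < s) :
    ∫ t in Ioo (0:ℝ) s, t ^ a * (s - t) ^ b
      = s ^ (a + b + 1) * (Real.Gamma (a + 1) * Real.Gamma (b + 1) / Real.Gamma (a + b + 2)) := by
  have hΓsum : Complex.Gamma (((a+1:ℝ):ℂ) + ((b+1:ℝ):ℂ)) = ((Real.Gamma (a+b+2) : ℝ) : ℂ) := by
    rw [show ((a+1:ℝ):ℂ) + ((b+1:ℝ):ℂ) = ((a+b+2 : ℝ) : ℂ) by push_cast; ring,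
      Complex.Gamma_ofReal]
  have hne : ((Real.Gamma (a+b+2) : ℝ) : ℂ) ≠ 0 := by
    exact_mod_cast (Real.Gamma_pos_of_pos (by linarith : (0:ℝ) < a+b+2)).ne'
  have hbeta : Complex.betaIntegral ((a+1:ℝ):ℂ) ((b+1:ℝ):ℂ)
      = ((Real.Gamma (a+1) * Real.Gamma (b+1) / Real.Gamma (a+b+2) : ℝ) : ℂ) := by
    have h := Complex.Gamma_mul_Gamma_eq_betaIntegral (s := ((a+1:ℝ):ℂ)) (t := ((b+1:ℝ):ℂ))
      (by simp; linarith) (by simp; linarith)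
    rw [hΓsum, Complex.Gamma_ofReal, Complex.Gamma_ofReal] at h
    rw [eq_comm, Complex.ofReal_div, div_eq_iff hne]
    simp only [Complex.ofReal_add, Complex.ofReal_one, Complex.ofReal_mul] at h ⊢
    linear_combination h
  have hsc := Complex.betaIntegral_scaled ((a+1:ℝ):ℂ) ((b+1:ℝ):ℂ) hs
  rw [intervalIntegral.integral_of_le hs.le] at hsc
  have hpt : ∀ t ∈ Ioc (0:ℝ) s,
      (t:ℂ) ^ (((a+1:ℝ):ℂ) - 1) * (((s:ℝ):ℂ) - (t:ℂ)) ^ (((b+1:ℝ):ℂ) - 1)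
        = ((t ^ a * (s - t) ^ b : ℝ) : ℂ) := by
    intro t ht
    have ht0 : (0:ℝ) ≤ t := le_of_lt ht.1
    have hst : (0:ℝ) ≤ s - t := by linarith [ht.2]
    rw [show (((a+1:ℝ):ℂ) - 1) = ((a:ℝ):ℂ) by push_cast; ring,
      show (((b+1:ℝ):ℂ) - 1) = ((b:ℝ):ℂ) by push_cast; ring,
      show (((s:ℝ):ℂ) - (t:ℂ)) = ((s - t : ℝ) : ℂ) by push_cast; ring,
      ← Complex.ofReal_cpow ht0, ← Complex.ofReal_cpow hst, ← Complex.ofReal_mul]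
  have hL : (∫ t in Ioc (0:ℝ) s, (t:ℂ) ^ (((a+1:ℝ):ℂ) - 1) * (((s:ℝ):ℂ) - (t:ℂ)) ^ (((b+1:ℝ):ℂ) - 1))
      = ((∫ t in Ioc (0:ℝ) s, t ^ a * (s - t) ^ b : ℝ) : ℂ) := by
    rw [setIntegral_congr_fun measurableSet_Ioc hpt]
    exact integral_ofReal
  have : ((∫ t in Ioc (0:ℝ) s, t ^ a * (s - t) ^ b : ℝ) : ℂ)
      = ((s ^ (a + b + 1) * (Real.Gamma (a+1) * Real.Gamma (b+1) / Real.Gamma (a+b+2)) : ℝ) : ℂ) := by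
    rw [← hL, hsc, hbeta, show ((a+1:ℝ):ℂ) + ((b+1:ℝ):ℂ) - 1 = ((a+b+1:ℝ):ℂ) by push_cast; ring,
      ← Complex.ofReal_cpow hs.le, ← Complex.ofReal_mul]
  rw [← integral_Ioc_eq_integral_Ioo]
  exact_mod_cast this

lemma key {α a b : ℝ} (hα : 0 < α) (hα1 : α ≤ 1) (ha : 0 ≤ a) (hb : 0 ≤ b) :
    ∫ u in Ioi (0:ℝ), ∫ v in Ioi (0:ℝ), u ^ a * v ^ b * Gfun α (u + v)
      = Real.Gamma (a + 1) * Real.Gamma (b + 1) * Real.Gamma ((a + b) / α + 1)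
        / Real.Gamma (a + b + 1) := by
  set Bc : ℝ := Real.Gamma (a + 1) * Real.Gamma (b + 1) / Real.Gamma (a + b + 2) with hBc
  have hBc0 : 0 ≤ Bc := by
    rw [hBc]
    have := Real.Gamma_pos_of_pos (show (0:ℝ) < a + 1 by linarith)
    have := Real.Gamma_pos_of_pos (show (0:ℝ) < b + 1 by linarith)
    have := Real.Gamma_pos_of_pos (show (0:ℝ) < a + b + 2 by linarith)
    positivity
  set F : ℝ × ℝ → ENNReal := fun p =>
    ENNReal.ofReal (p.1 ^ a * (p.2 - p.1) ^ b * Gfun α p.2) *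
      Set.indicator {q : ℝ × ℝ | 0 < q.1 ∧ q.1 < q.2} 1 p with hF
  have hmset : MeasurableSet {q : ℝ × ℝ | 0 < q.1 ∧ q.1 < q.2} :=
    (measurableSet_lt measurable_const measurable_fst).inter
      (measurableSet_lt measurable_fst measurable_snd)
  have hfm : Measurable fun p : ℝ × ℝ => p.1 ^ a * (p.2 - p.1) ^ b * Gfun α p.2 := by
    have := Gfun_measurable α
    fun_prop
  have hFm : Measurable F := by
    exact (hfm.ennreal_ofReal).mul (measurable_one.indicator hmset)
  -- for s ≤ 0 or u ≤ 0, F vanishes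
  have hFzero : ∀ u s : ℝ, u ≤ 0 ∨ s ≤ u → F (u, s) = 0 := by
    intro u s h
    rw [hF]
    simp only
    rw [Set.indicator_of_notMem, mul_zero]
    rintro ⟨h1, h2⟩
    simp only at h1 h2
    rcases h with h | h
    · exact absurd h1 (not_lt.mpr h)
    · exact absurd h2 (not_lt.mpr h)
  -- Step R1: inner u-lintegral
  have hinner_u : ∀ s : ℝ, (∫⁻ u, F (u, s))
      = Set.indicator (Ioi (0:ℝ))
          (fun s => ENNReal.ofReal (Bc * (s ^ (a + b + 1) * Gfun α s))) s := by
    intro s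
    rcases le_or_gt s 0 with hs | hs
    · rw [Set.indicator_of_notMem (by simp [hs] : s ∉ Ioi (0:ℝ))]
      have hz : ∀ u : ℝ, F (u, s) = 0 := by
        intro u
        rcases le_or_gt u 0 with h | h
        · exact hFzero u s (Or.inl h)
        · exact hFzero u s (Or.inr (by linarith))
      rw [lintegral_congr hz, lintegral_zero]
    · rw [Set.indicator_of_mem (mem_Ioi.mpr hs)]
      have e1 : ∀ u : ℝ, F (u, s)
          = Set.indicator (Ioo (0:ℝ) s)
              (fun u => ENNReal.ofReal (u ^ a * (s - u) ^ b * Gfun α s)) u := by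
        intro u
        rcases Classical.em (u ∈ Ioo (0:ℝ) s) with hu | hu
        · rw [Set.indicator_of_mem hu, hF]
          simp only
          rw [Set.indicator_of_mem (by exact ⟨hu.1, hu.2⟩), Pi.one_apply, mul_one]
        · rw [Set.indicator_of_notMem hu]
          refine hFzero u s ?_
          rcases le_or_gt u 0 with h | h
          · exact Or.inl h
          · exact Or.inr (le_of_not_gt fun h2 => hu ⟨h, h2⟩)
      rw [lintegral_congr e1, lintegral_indicator measurableSet_Ioo _]
      have hint : IntegrableOn (fun u : ℝ => u ^ a * (s - u) ^ b * Gfun α s) (Ioo 0 s) := by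
        have hc1 : ContinuousOn (fun u : ℝ => u ^ a * (s - u) ^ b * Gfun α s) (Icc 0 s) := by
          refine ContinuousOn.mul (ContinuousOn.mul ?_ ?_) continuousOn_const
          · exact continuousOn_id.rpow_const fun x hx => Or.inr ha
          · exact (continuousOn_const.sub continuousOn_id).rpow_const fun x hx => Or.inr hb
        exact (hc1.integrableOn_Icc).mono_set Ioo_subset_Icc_self
      rw [← ofReal_integral_eq_lintegral_ofReal hint]
      · rw [integral_mul_const, blem ha hb hs]
        congr 1
        ring
      · refine (ae_restrict_iff' measurableSet_Ioo).mpr (Filter.Eventually.of_forall fun u hu => ?_)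
        have h1 : (0:ℝ) ≤ u ^ a := rpow_nonneg hu.1.le _
        have h2 : (0:ℝ) ≤ (s - u) ^ b := rpow_nonneg (by linarith [hu.2]) _
        have h3 := Gfun_nonneg hα hα1 hs
        positivity
  -- total
  have hMint' := Mint (c := a + b) hα (by linarith)
  have hT : (∫⁻ s, ∫⁻ u, F (u, s)) = ENNReal.ofReal (Bc * ∫ s in Ioi (0:ℝ), s ^ (a + b + 1) * Gfun α s) := by
    rw [lintegral_congr hinner_u, lintegral_indicator measurableSet_Ioi _,
      ← ofReal_integral_eq_lintegral_ofReal (hMint'.const_mul Bc)]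
    · rw [integral_const_mul]
    · refine (ae_restrict_iff' measurableSet_Ioi).mpr (Filter.Eventually.of_forall fun s hs => ?_)
      have h1 : (0:ℝ) ≤ s ^ (a + b + 1) := rpow_nonneg (le_of_lt hs) _
      have h3 := Gfun_nonneg hα hα1 hs
      positivity
  -- Step L1
  have hL1 : ∀ u : ℝ, u ∈ Ioi (0:ℝ) →
      (∫ v in Ioi (0:ℝ), u ^ a * v ^ b * Gfun α (u + v))
        = (∫⁻ s, F (u, s)).toReal := by
    intro u hu
    have hu0 : (0:ℝ) < u := hu
    have hmeas : Measurable fun v : ℝ => u ^ a * v ^ b * Gfun α (u + v) := by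
      have := Gfun_measurable α
      fun_prop
    rw [integral_eq_lintegral_of_nonneg_ae]
    rotate_left
    · refine (ae_restrict_iff' measurableSet_Ioi).mpr (Filter.Eventually.of_forall fun v hv => ?_)
      have h1 : (0:ℝ) ≤ u ^ a := rpow_nonneg hu0.le _
      have h2 : (0:ℝ) ≤ v ^ b := rpow_nonneg (le_of_lt hv) _
      have h3 := Gfun_nonneg hα hα1 (show (0:ℝ) < u + v by have : (0:ℝ) < v := hv; linarith)
      positivity
    · exact (hmeas.aestronglyMeasurable).restrict
    -- now identify the lintegrals
    congr 1
    have e2 : ∀ s : ℝ, F (u, s)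
        = Set.indicator (Ioi u) (fun s => ENNReal.ofReal (u ^ a * (s - u) ^ b * Gfun α s)) s := by
      intro s
      rcases Classical.em (s ∈ Ioi u) with hs | hs
      · rw [Set.indicator_of_mem hs, hF]
        simp only
        rw [Set.indicator_of_mem (by exact ⟨hu0, hs⟩), Pi.one_apply, mul_one]
      · rw [Set.indicator_of_notMem hs]
        exact hFzero u s (Or.inr (le_of_not_gt hs))
    rw [lintegral_congr e2, lintegral_indicator measurableSet_Ioi _]
    have hmp := (measurePreserving_add_right (volume : Measure ℝ) u).map_eq
    have hmeas2 : Measurable fun s : ℝ => ENNReal.ofReal (u ^ a * (s - u) ^ b * Gfun α s) := by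
      have := Gfun_measurable α
      fun_prop
    have hcalc : (∫⁻ s in Ioi u, ENNReal.ofReal (u ^ a * (s - u) ^ b * Gfun α s))
        = ∫⁻ v in Ioi (0:ℝ), ENNReal.ofReal (u ^ a * v ^ b * Gfun α (u + v)) :=
      calc ∫⁻ s in Ioi u, ENNReal.ofReal (u ^ a * (s - u) ^ b * Gfun α s)
          = ∫⁻ s in Ioi u, ENNReal.ofReal (u ^ a * (s - u) ^ b * Gfun α s)
              ∂(Measure.map (fun x => x + u) volume) := by rw [hmp]
        _ = ∫⁻ v in (fun x => x + u) ⁻¹' Ioi u, ENNReal.ofReal (u ^ a * (v + u - u) ^ b * Gfun α (v + u)) := by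
          rw [setLIntegral_map measurableSet_Ioi hmeas2 (measurable_add_const u)]
        _ = ∫⁻ v in Ioi (0:ℝ), ENNReal.ofReal (u ^ a * v ^ b * Gfun α (u + v)) := by
            have hpre : (fun x : ℝ => x + u) ⁻¹' Ioi u = Ioi 0 := by
              ext v
              simp only [mem_preimage, mem_Ioi]
              constructor <;> intro h <;> linarith
            rw [hpre]
            refine setLIntegral_congr_fun measurableSet_Ioi
              (fun v hv => ?_)
            rw [add_sub_cancel_right, add_comm]
    exact hcalc.symm
  have hL2 : (∫ u in Ioi (0:ℝ), ∫ v in Ioi (0:ℝ), u ^ a * v ^ b * Gfun α (u + v))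
      = ∫ u : ℝ, (∫⁻ s, F (u, s)).toReal := by
    rw [setIntegral_congr_fun measurableSet_Ioi hL1]
    refine setIntegral_eq_integral_of_forall_compl_eq_zero fun u hu => ?_
    have hu0 : u ≤ 0 := by simpa using hu
    have hz : ∀ s : ℝ, F (u, s) = 0 := fun s => hFzero u s (Or.inl hu0)
    simp [hz]
  have hmeasH : Measurable fun u : ℝ => ∫⁻ s, F (u, s) := hFm.lintegral_prod_right'
  have hswap : (∫⁻ u, ∫⁻ s, F (u, s)) = ∫⁻ s, ∫⁻ u, F (u, s) := by
    exact lintegral_lintegral_swap hFm.aemeasurable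
  have hfin : (∫⁻ u, ∫⁻ s, F (u, s)) ≠ ⊤ := by
    rw [hswap, hT]; exact ENNReal.ofReal_ne_top
  have hae : ∀ᵐ u : ℝ, (∫⁻ s, F (u, s)) < ⊤ := ae_lt_top hmeasH hfin
  have hMnn : 0 ≤ ∫ s in Ioi (0:ℝ), s ^ (a + b + 1) * Gfun α s := by
    refine setIntegral_nonneg measurableSet_Ioi fun s hs => ?_
    have h1 : (0:ℝ) ≤ s ^ (a + b + 1) := rpow_nonneg (le_of_lt hs) _
    have h3 := Gfun_nonneg hα hα1 hs
    positivity
  rw [hL2, integral_toReal hmeasH.aemeasurable hae, hswap, hT,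
    ENNReal.toReal_ofReal (by positivity), Mlem hα (by linarith : (0:ℝ) ≤ a + b)]
  have hne1 : a + b + 1 ≠ 0 := by positivity
  have hΓ2 : Real.Gamma (a + b + 2) = (a + b + 1) * Real.Gamma (a + b + 1) := by
    rw [show a + b + 2 = (a + b + 1) + 1 by ring, Real.Gamma_add_one hne1]
  have hΓ1pos := Real.Gamma_pos_of_pos (show (0:ℝ) < a + b + 1 by positivity)
  rw [hBc, hΓ2]
  field_simp

/-- For the bivariate Weibull distribution with survival function
`S(x,y) = exp(-[(x/λ₁)^(γ₁/α) + (y/λ₂)^(γ₂/α)]^α)` and density `f = ∂²S/∂x∂y`, the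
mixed moment is
`E[X^i Y^j] = λ₁^i λ₂^j Γ(iα/γ₁+1) Γ(jα/γ₂+1) Γ(i/γ₁+j/γ₂+1) / Γ(α(i/γ₁+j/γ₂)+1)`. -/
theorem stmt_15 (α lam₁ lam₂ gam₁ gam₂ i j : ℝ)
    (hα : 0 < α) (hα1 : α ≤ 1) (hlam₁ : 0 < lam₁) (hlam₂ : 0 < lam₂)
    (hgam₁ : 0 < gam₁) (hgam₂ : 0 < gam₂) (hi : 0 ≤ i) (hj : 0 ≤ j) :
    ∫ x in Set.Ioi (0 : ℝ), ∫ y in Set.Ioi (0 : ℝ),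
        x ^ i * y ^ j *
          (Real.exp (-((x / lam₁) ^ (gam₁ / α) + (y / lam₂) ^ (gam₂ / α)) ^ α) *
            (gam₁ * gam₂ / (lam₁ * lam₂ * α ^ 2)) *
            ((x / lam₁) ^ (gam₁ / α - 1) * (y / lam₂) ^ (gam₂ / α - 1)) *
            (α ^ 2 * ((x / lam₁) ^ (gam₁ / α) + (y / lam₂) ^ (gam₂ / α)) ^ (2 * α - 2) -
              α * (α - 1) *
                ((x / lam₁) ^ (gam₁ / α) + (y / lam₂) ^ (gam₂ / α)) ^ (α - 2))) =
      lam₁ ^ i * lam₂ ^ j * Real.Gamma (i * α / gam₁ + 1) * Real.Gamma (j * α / gam₂ + 1) *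
        Real.Gamma (i / gam₁ + j / gam₂ + 1) /
        Real.Gamma (α * (i / gam₁ + j / gam₂) + 1) := by
  have hp₁ : (0:ℝ) < α / gam₁ := div_pos hα hgam₁
  have hp₂ : (0:ℝ) < α / gam₂ := div_pos hα hgam₂
  -- pointwise substitution facts
  have hfact : ∀ (lam gam : ℝ), 0 < lam → 0 < gam → ∀ u : ℝ, 0 < u →
      (lam * u ^ (α / gam) / lam) ^ (gam / α) = u ∧
      (lam * u ^ (α / gam) / lam) ^ (gam / α - 1) = u ^ (1 - α / gam) ∧
      ∀ e : ℝ, (lam * u ^ (α / gam)) ^ e = lam ^ e * u ^ (e * α / gam) := by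
    intro lam gam hlam hgam u hu
    have h1 : lam * u ^ (α / gam) / lam = u ^ (α / gam) :=
      mul_div_cancel_left₀ _ hlam.ne'
    refine ⟨?_, ?_, ?_⟩
    · rw [h1, ← rpow_mul hu.le, show α / gam * (gam / α) = 1 by
        field_simp, rpow_one]
    · rw [h1, ← rpow_mul hu.le]
      congr 1
      field_simp
    · intro e
      rw [mul_rpow hlam.le (rpow_nonneg hu.le _), ← rpow_mul hu.le]
      congr 2
      ring
  have ha : 0 ≤ i * α / gam₁ := div_nonneg (mul_nonneg hi hα.le) hgam₁.le
  have hb : 0 ≤ j * α / gam₂ := div_nonneg (mul_nonneg hj hα.le) hgam₂.le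
  rw [subst1 hlam₁ hp₁]
  have hstep : ∀ u ∈ Ioi (0:ℝ),
      u ^ (α / gam₁ - 1) *
        ∫ (y : ℝ) in Ioi (0:ℝ),
          (lam₁ * u ^ (α / gam₁)) ^ i * y ^ j *
            (Real.exp (-((lam₁ * u ^ (α / gam₁) / lam₁) ^ (gam₁ / α) + (y / lam₂) ^ (gam₂ / α)) ^ α) *
                  (gam₁ * gam₂ / (lam₁ * lam₂ * α ^ 2)) *
                ((lam₁ * u ^ (α / gam₁) / lam₁) ^ (gam₁ / α - 1) * (y / lam₂) ^ (gam₂ / α - 1)) *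
              (α ^ 2 * ((lam₁ * u ^ (α / gam₁) / lam₁) ^ (gam₁ / α) + (y / lam₂) ^ (gam₂ / α)) ^ (2 * α - 2) -
                α * (α - 1) * ((lam₁ * u ^ (α / gam₁) / lam₁) ^ (gam₁ / α) + (y / lam₂) ^ (gam₂ / α)) ^ (α - 2)))
        = (lam₁ ^ i * lam₂ ^ j / (lam₁ * (α / gam₁))) *
            ∫ v in Ioi (0:ℝ), u ^ (i * α / gam₁) * v ^ (j * α / gam₂) * Gfun α (u + v) := by
    intro u hu
    have hu0 : (0:ℝ) < u := hu
    rw [subst1 hlam₂ hp₂]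
    rw [← integral_const_mul, ← integral_const_mul, ← integral_const_mul]
    refine setIntegral_congr_fun measurableSet_Ioi fun v hv => ?_
    have hv0 : (0:ℝ) < v := hv
    obtain ⟨e1, e2, e3⟩ := hfact lam₁ gam₁ hlam₁ hgam₁ u hu0
    obtain ⟨f1, f2, f3⟩ := hfact lam₂ gam₂ hlam₂ hgam₂ v hv0
    rw [e1, e2, f1, f2, e3 i, f3 j]
    simp only [Gfun]
    rw [show (1:ℝ) - α / gam₁ = -(α / gam₁ - 1) by ring, rpow_neg hu0.le,
      show (1:ℝ) - α / gam₂ = -(α / gam₂ - 1) by ring, rpow_neg hv0.le]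
    have hP : u ^ (α / gam₁ - 1) ≠ 0 := (rpow_pos_of_pos hu0 _).ne'
    have hQ : v ^ (α / gam₂ - 1) ≠ 0 := (rpow_pos_of_pos hv0 _).ne'
    field_simp
  rw [setIntegral_congr_fun measurableSet_Ioi hstep, integral_const_mul,
    key hα hα1 ha hb,
    show (i * α / gam₁ + j * α / gam₂) / α + 1 = i / gam₁ + j / gam₂ + 1 by
      field_simp,
    show i * α / gam₁ + j * α / gam₂ + 1 = α * (i / gam₁ + j / gam₂) + 1 by
      field_simp]
  have hnn : (0:ℝ) ≤ i / gam₁ + j / gam₂ :=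
    add_nonneg (div_nonneg hi hgam₁.le) (div_nonneg hj hgam₂.le)
  have hΓF : Real.Gamma (α * (i / gam₁ + j / gam₂) + 1) ≠ 0 := by
    refine (Real.Gamma_pos_of_pos ?_).ne'
    nlinarith [mul_nonneg hα.le hnn]
  field_simp
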